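/- For n ≥ 3, let C̃_n be the oriented cycle on vertex set ℤ_n with arcs j → j+1 for j = 0,…,n−2, together with the arc 0 → n−1 (the directed n-cycle with one arc reversed). Then the multiset of eigenvalues of H(C̃_n) is { 2·sin((2j+1)π/n) : j = 0, 1, …, n−1 }. -/

import Mathlib

open Matrix Complex Real

/-- Hermitian adjacency matrix of a digraph given by its arc relation `E`. -/
def hermAdj {V : Type*} (E : V → V → Prop) [DecidableRel E] : Matrix V V ℂ :=
  fun u v =>
    if E u v ∧ E v u then 1
    else if E u v then Complex.I
    else if E v u then -Complex.I
    else 0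

/-- The arc relation of `C̃_n`, the directed `n`-cycle with one arc reversed:
arcs `j → j+1` for `j = 0, …, n-2`, together with the arc `0 → n-1`. -/
def cTilde (n : ℕ) : Fin n → Fin n → Prop :=
  fun a b => (a.val + 1 = b.val) ∨ (a.val = 0 ∧ b.val = n - 1)

instance (n : ℕ) : DecidableRel (cTilde n) := fun a b =>
  inferInstanceAs (Decidable ((a.val + 1 = b.val) ∨ (a.val = 0 ∧ b.val = n - 1)))

open Polynomial in
/-- Characteristic polynomial of a diagonal matrix. -/
lemma charpolyDiagAux {n : ℕ} (d : Fin n → ℂ) :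
    (Matrix.diagonal d).charpoly = ∏ i, (X - C (d i)) := by
  have h : charmatrix (Matrix.diagonal d) = Matrix.diagonal (fun i => (X : ℂ[X]) - C (d i)) := by
    ext i j
    by_cases h : i = j
    · subst h; simp
    · simp [charmatrix_apply_ne _ _ _ h, Matrix.diagonal_apply_ne _ h]
  rw [Matrix.charpoly, h, Matrix.det_diagonal]

open Polynomial in
/-- The characteristic polynomial is invariant under conjugation. -/
lemma charpolyConjAux {n : ℕ} (U V D : Matrix (Fin n) (Fin n) ℂ)
    (hUV : U * V = 1) : (U * D * V).charpoly = D.charpoly := by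
  have hc : charmatrix (U * D * V) = U.map C * charmatrix D * V.map C := by
    rw [charmatrix, charmatrix, RingHom.mapMatrix_apply, RingHom.mapMatrix_apply,
      Matrix.mul_sub, Matrix.sub_mul]
    congr 1
    · rw [scalar_apply, ← Matrix.smul_one_eq_diagonal, Matrix.mul_smul, Matrix.smul_mul,
        mul_one, ← Matrix.map_mul, hUV, Matrix.map_one _ (map_zero C) (map_one C),
        Matrix.smul_one_eq_diagonal]
    · rw [← Matrix.map_mul, ← Matrix.map_mul]
  rw [Matrix.charpoly, Matrix.charpoly, hc, Matrix.det_mul, Matrix.det_mul]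
  have h1 : U.map C * V.map C = 1 := by
    rw [← Matrix.map_mul, hUV, Matrix.map_one _ (map_zero C) (map_one C)]
  have hdet : det (U.map C) * det (V.map C) = 1 := by
    rw [← Matrix.det_mul, h1, Matrix.det_one]
  calc det (U.map C) * det (charmatrix D) * det (V.map C)
      = det (charmatrix D) * (det (U.map C) * det (V.map C)) := by ring
    _ = det (charmatrix D) := by rw [hdet, mul_one]

open Polynomial in
/-- Two families with the same product of linear factors give the same multiset. -/
lemma multisetOfProdAux {n : ℕ} {f g : Fin n → ℂ}
    (h : ∏ i, (X - C (f i)) = ∏ i, (X - C (g i))) :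
    Multiset.map f Finset.univ.val = Multiset.map g Finset.univ.val := by
  have key : ∀ (f : Fin n → ℂ),
      ∏ i, (X - C (f i)) = ((Finset.univ.val.map f).map (fun a => X - C a)).prod := by
    intro f
    rw [Multiset.map_map, Finset.prod]
    rfl
  have h2 := congrArg Polynomial.roots h
  rwa [key f, key g, Polynomial.roots_multiset_prod_X_sub_C,
    Polynomial.roots_multiset_prod_X_sub_C] at h2

noncomputable def thAux (n : ℕ) (k : Fin n) : ℝ := (2 * k.val + 1) * Real.pi / n

noncomputable def betaAux (n : ℕ) (k : Fin n) : ℂ :=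
  Complex.exp (-(thAux n k : ℂ) * Complex.I)

noncomputable def evAux (n : ℕ) (k : Fin n) : ℝ := 2 * Real.sin (thAux n k)

noncomputable def Uaux (n : ℕ) : Matrix (Fin n) (Fin n) ℂ :=
  Matrix.of fun x k => betaAux n k ^ (x : ℕ)

lemma betaAux_ne_zero (n : ℕ) (k : Fin n) : betaAux n k ≠ 0 := Complex.exp_ne_zero _

lemma keyAux (n : ℕ) (k : Fin n) :
    Complex.I * ((betaAux n k) ^ 2 - 1) = (evAux n k : ℂ) * betaAux n k := by
  set z : ℂ := (thAux n k : ℂ) with hz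
  have hsin : (evAux n k : ℂ) = 2 * Complex.sin z := by
    simp [evAux, hz, Complex.ofReal_sin]
  have hEE : Complex.exp (-z * Complex.I) * Complex.exp (z * Complex.I) = 1 := by
    rw [← Complex.exp_add]; ring_nf; exact Complex.exp_zero
  have hb : betaAux n k = Complex.exp (-z * Complex.I) := rfl
  rw [hsin, Complex.sin, hb]
  set E := Complex.exp (-z * Complex.I)
  set E' := Complex.exp (z * Complex.I)
  linear_combination Complex.I * hEE

lemma betaAux_pow_n (n : ℕ) (hn : 0 < n) (k : Fin n) : betaAux n k ^ n = -1 := by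
  rw [betaAux, ← Complex.exp_nat_mul]
  have hn' : (n : ℂ) ≠ 0 := Nat.cast_ne_zero.mpr hn.ne'
  have h1 : (n : ℂ) * (-(thAux n k : ℂ) * Complex.I)
      = ((-(k.val : ℤ) : ℤ) : ℂ) * (2 * Real.pi * Complex.I) + (-(Real.pi * Complex.I)) := by
    rw [thAux]
    push_cast
    field_simp
    ring
  rw [h1, Complex.exp_add, Complex.exp_int_mul_two_pi_mul_I, one_mul,
    Complex.exp_neg, Complex.exp_pi_mul_I]
  norm_num

lemma gammaAux (n : ℕ) (k l : Fin n) :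
    (starRingEnd ℂ) (betaAux n k) * betaAux n l
      = Complex.exp (((thAux n k - thAux n l : ℝ) : ℂ) * Complex.I) := by
  rw [betaAux, betaAux, ← Complex.exp_conj, ← Complex.exp_add]
  congr 1
  simp only [_root_.map_mul, _root_.map_neg, Complex.conj_ofReal, Complex.conj_I]
  push_cast
  ring

lemma UauxStar (n : ℕ) (hn : 0 < n) : star (Uaux n) * Uaux n = (n : ℂ) • 1 := by
  ext k l
  rw [Matrix.star_eq_conjTranspose, Matrix.mul_apply]
  simp only [Matrix.conjTranspose_apply, Uaux, Matrix.of_apply, Matrix.smul_apply,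
    Matrix.one_apply, star_pow]
  set γ : ℂ := Complex.exp (((thAux n k - thAux n l : ℝ) : ℂ) * Complex.I) with hγ
  have hsum : ∀ x : Fin n,
      (star (betaAux n k)) ^ (x : ℕ) * betaAux n l ^ (x : ℕ) = γ ^ (x : ℕ) := by
    intro x
    rw [← mul_pow]
    congr 1
    exact gammaAux n k l
  rw [Finset.sum_congr rfl (fun x _ => hsum x)]
  have hfin : ∑ x : Fin n, γ ^ (x : ℕ) = ∑ i ∈ Finset.range n, γ ^ i :=
    Fin.sum_univ_eq_sum_range _ n
  by_cases hkl : k = l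
  · subst hkl
    simp only [sub_self, Complex.ofReal_zero, zero_mul, Complex.exp_zero, hγ] at *
    simp [hfin, smul_eq_mul]
  · have hγn : γ ^ n = 1 := by
      rw [hγ, ← Complex.exp_nat_mul]
      have h2 : (n : ℂ) * (((thAux n k - thAux n l : ℝ) : ℂ) * Complex.I)
          = (((k.val : ℤ) - (l.val : ℤ) : ℤ) : ℂ) * (2 * Real.pi * Complex.I) := by
        have hn' : (n : ℂ) ≠ 0 := Nat.cast_ne_zero.mpr hn.ne'
        rw [thAux, thAux]
        push_cast
        field_simp
        ring
      rw [h2, Complex.exp_int_mul_two_pi_mul_I]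
    have hγ1 : γ ≠ 1 := by
      intro h
      rw [hγ, Complex.exp_eq_one_iff] at h
      obtain ⟨m, hm⟩ := h
      have hI : ((thAux n k - thAux n l : ℝ) : ℂ) = (m : ℂ) * (2 * Real.pi) := by
        have h3 := hm
        field_simp at h3 ⊢
        rw [mul_comm ((m : ℂ)) _] at h3 ⊢
        exact mul_right_cancel₀ Complex.I_ne_zero (by linear_combination Complex.I * h3)
      have hR : (thAux n k - thAux n l : ℝ) = (m : ℝ) * (2 * Real.pi) := by
        exact_mod_cast hI
      rw [thAux, thAux] at hR
      have hπ : Real.pi ≠ 0 := Real.pi_ne_zero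
      have hn' : (n : ℝ) ≠ 0 := Nat.cast_ne_zero.mpr hn.ne'
      have hklR : (k.val : ℝ) - (l.val : ℝ) = (m : ℝ) * n := by
        field_simp at hR
        nlinarith [hR, Real.pi_pos]
      have hklZ : (k.val : ℤ) - (l.val : ℤ) = m * n := by exact_mod_cast hklR
      have hk := k.isLt; have hl := l.isLt
      have hne : k.val ≠ l.val := fun h => hkl (Fin.ext h)
      rcases lt_trichotomy m 0 with hm0 | hm0 | hm0
      · have : m * (n : ℤ) ≤ -n := by nlinarith [hm0]
        omega
      · subst hm0; simp at hklZ; omega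
      · have : (n : ℤ) ≤ m * n := by nlinarith [hm0]
        omega
    rw [hfin, geom_sum_eq hγ1, hγn, sub_self, zero_div]
    simp [hkl]

lemma cTilde_not_both {n : ℕ} (hn : 3 ≤ n) (x y : Fin n) :
    ¬(cTilde n x y ∧ cTilde n y x) := by
  rintro ⟨h1, h2⟩
  unfold cTilde at h1 h2
  have hx := x.isLt
  have hy := y.isLt
  omega

lemma hermAdj_cTilde_apply {n : ℕ} (hn : 3 ≤ n) (x y : Fin n) :
    hermAdj (cTilde n) x y
      = (if cTilde n x y then Complex.I else 0) + (if cTilde n y x then -Complex.I else 0) := by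
  unfold hermAdj
  by_cases h1 : cTilde n x y <;> by_cases h2 : cTilde n y x
  · exact absurd ⟨h1, h2⟩ (cTilde_not_both hn x y)
  · simp [h1, h2]
  · simp [h1, h2]
  · simp [h1, h2]

lemma HUaux {n : ℕ} (hn : 3 ≤ n) :
    hermAdj (cTilde n) * Uaux n
      = Uaux n * Matrix.diagonal (fun k => (evAux n k : ℂ)) := by
  ext x k
  rw [Matrix.mul_apply, Matrix.mul_diagonal]
  simp only [hermAdj_cTilde_apply hn, add_mul, ite_mul, zero_mul, neg_mul,
    Finset.sum_add_distrib, Uaux, Matrix.of_apply]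
  set β := betaAux n k with hβ
  set ev : ℂ := (evAux n k : ℂ) with hev
  have hβ0 : β ≠ 0 := betaAux_ne_zero n k
  have hkey : Complex.I * (β ^ 2 - 1) = ev * β := keyAux n k
  have hβn : β ^ n = -1 := betaAux_pow_n n (by omega) k
  by_cases hx0 : x.val = 0
  · -- row 0 : I*β^1 + I*β^(n-1) = β^0 * ev
    have hS1 : (∑ y : Fin n, if cTilde n x y then Complex.I * β ^ (y : ℕ) else 0)
        = Complex.I * β ^ (1 : ℕ) + Complex.I * β ^ (n - 1) := by
      rw [Finset.sum_eq_add (⟨1, by omega⟩ : Fin n) (⟨n - 1, by omega⟩ : Fin n)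
        (by simp only [ne_eq, Fin.mk.injEq]; omega)
        (fun c _ hc => by
          rw [if_neg]
          intro h
          simp only [ne_eq, Fin.ext_iff, Fin.val_mk] at hc
          unfold cTilde at h
          omega)
        (fun h => absurd (Finset.mem_univ _) h) (fun h => absurd (Finset.mem_univ _) h)]
      rw [if_pos (by unfold cTilde; simp only [Fin.val_mk, and_true, true_and]; omega),
        if_pos (by unfold cTilde; simp only [Fin.val_mk, and_true, true_and]; omega)]
    have hS2 : (∑ y : Fin n, if cTilde n y x then -(Complex.I * β ^ (y : ℕ)) else 0) = 0 := by
      apply Finset.sum_eq_zero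
      intro y _
      rw [if_neg]
      intro h
      unfold cTilde at h
      have := y.isLt
      omega
    rw [hS1, hS2, hx0]
    have hc : β ^ (n - 1) * β = -1 := by
      rw [← pow_succ]
      rw [show n - 1 + 1 = n by omega, hβn]
    apply mul_right_cancel₀ hβ0
    ring_nf
    ring_nf at hkey hc
    linear_combination Complex.I * hc + hkey
  · by_cases hxn : x.val = n - 1
    · -- last row : -I*β^(n-2) - I = β^(n-1) * ev
      have hS1 : (∑ y : Fin n, if cTilde n x y then Complex.I * β ^ (y : ℕ) else 0) = 0 := by
        apply Finset.sum_eq_zero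
        intro y _
        rw [if_neg]
        intro h
        unfold cTilde at h
        have := y.isLt
        omega
      have hS2 : (∑ y : Fin n, if cTilde n y x then -(Complex.I * β ^ (y : ℕ)) else 0)
          = -(Complex.I * β ^ (n - 2)) + -(Complex.I * β ^ (0 : ℕ)) := by
        rw [Finset.sum_eq_add (⟨n - 2, by omega⟩ : Fin n) (⟨0, by omega⟩ : Fin n)
          (by simp only [ne_eq, Fin.mk.injEq]; omega)
          (fun c _ hc => by
            rw [if_neg]
            intro h
            simp only [ne_eq, Fin.ext_iff, Fin.val_mk] at hc
            unfold cTilde at h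
            omega)
          (fun h => absurd (Finset.mem_univ _) h) (fun h => absurd (Finset.mem_univ _) h)]
        rw [if_pos (by unfold cTilde; simp only [Fin.val_mk, and_true, true_and]; omega),
          if_pos (by unfold cTilde; simp only [Fin.val_mk, and_true, true_and]; omega)]
      rw [hS1, hS2, hxn]
      have ha : β ^ (n - 2) * β ^ 2 = -1 := by
        rw [← pow_add, show n - 2 + 2 = n by omega, hβn]
      have hb2 : β ^ (n - 1) * β = -1 := by
        rw [← pow_succ, show n - 1 + 1 = n by omega, hβn]
      apply mul_right_cancel₀ (pow_ne_zero 2 hβ0)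
      ring_nf
      ring_nf at hkey ha hb2
      linear_combination (-Complex.I) * ha - hkey - ev * β * hb2
    · -- middle row : I*β^(x+1) - I*β^(x-1) = β^x * ev
      set m := x.val - 1 with hm
      have hS1 : (∑ y : Fin n, if cTilde n x y then Complex.I * β ^ (y : ℕ) else 0)
          = Complex.I * β ^ (x.val + 1) := by
        rw [Finset.sum_eq_single (⟨x.val + 1, by omega⟩ : Fin n)
          (fun c _ hc => by
            rw [if_neg]
            intro h
            simp only [ne_eq, Fin.ext_iff, Fin.val_mk] at hc
            unfold cTilde at h
            omega)
          (fun h => absurd (Finset.mem_univ _) h)]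
        rw [if_pos (show cTilde n x ⟨x.val + 1, by omega⟩ from Or.inl rfl)]
      have hS2 : (∑ y : Fin n, if cTilde n y x then -(Complex.I * β ^ (y : ℕ)) else 0)
          = -(Complex.I * β ^ m) := by
        rw [Finset.sum_eq_single (⟨m, by omega⟩ : Fin n)
          (fun c _ hc => by
            rw [if_neg]
            intro h
            simp only [ne_eq, Fin.ext_iff, Fin.val_mk] at hc
            unfold cTilde at h
            omega)
          (fun h => absurd (Finset.mem_univ _) h)]
        rw [if_pos (by unfold cTilde; simp only [Fin.val_mk, and_true, true_and]; omega)]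
      rw [hS1, hS2]
      have e1 : β ^ (x.val + 1) = β ^ m * β ^ 2 := by
        rw [← pow_add]; congr 1; omega
      have e2 : β ^ (x.val : ℕ) = β ^ m * β := by
        rw [← pow_succ]; congr 1; omega
      rw [e1, e2]
      linear_combination (β ^ m) * hkey

/-- For `n ≥ 3`, the multiset of eigenvalues of `H(C̃_n)` is
`{2 sin((2j+1)π/n) : j = 0, …, n-1}`. -/
theorem stmt18 (n : ℕ) (hn : 3 ≤ n)
    (hH : (hermAdj (cTilde n)).IsHermitian) :
    Multiset.map hH.eigenvalues Finset.univ.val =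
      Multiset.map
        (fun j : Fin n => 2 * Real.sin ((2 * j.val + 1) * Real.pi / n))
        Finset.univ.val := by
  classical
  have hn0 : (0 : ℕ) < n := by omega
  have hnC : (n : ℂ) ≠ 0 := Nat.cast_ne_zero.mpr hn0.ne'
  set U := Uaux n with hU
  set V : Matrix (Fin n) (Fin n) ℂ := (n : ℂ)⁻¹ • star U with hV
  have hVU : V * U = 1 := by
    rw [hV, Matrix.smul_mul, UauxStar n hn0, smul_smul, inv_mul_cancel₀ hnC, one_smul]
  have hUV : U * V = 1 := _root_.mul_eq_one_comm.mp hVU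
  -- factor H through the diagonal matrix of sines
  have hHfac : hermAdj (cTilde n)
      = U * Matrix.diagonal (fun k => (evAux n k : ℂ)) * V := by
    conv_lhs => rw [← mul_one (hermAdj (cTilde n)), ← hUV, ← Matrix.mul_assoc, HUaux hn]
  -- the spectral theorem factorization
  have hspec := hH.spectral_theorem
  set W : Matrix (Fin n) (Fin n) ℂ := (hH.eigenvectorUnitary : Matrix (Fin n) (Fin n) ℂ)
    with hW
  have hWmem : W ∈ Matrix.unitaryGroup (Fin n) ℂ := hH.eigenvectorUnitary.2
  have hWW : W * star W = 1 := Matrix.mem_unitaryGroup_iff.mp hWmem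
  -- compare characteristic polynomials
  open Polynomial in
  have hcp : ∏ i, (X - C ((hH.eigenvalues i : ℝ) : ℂ)) = ∏ i, (X - C ((evAux n i : ℝ) : ℂ)) := by
    have h1 : (hermAdj (cTilde n)).charpoly
        = (Matrix.diagonal ((fun r : ℝ => (r : ℂ)) ∘ hH.eigenvalues)).charpoly := by
      conv_lhs => rw [hspec]
      exact charpolyConjAux W (star W) _ hWW
    have h2 : (hermAdj (cTilde n)).charpoly
        = (Matrix.diagonal (fun k => (evAux n k : ℂ))).charpoly := by
      conv_lhs => rw [hHfac]
      exact charpolyConjAux U V _ hUV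
    have h3 := h1.symm.trans h2
    rw [charpolyDiagAux, charpolyDiagAux] at h3
    exact h3
  have hmul : Multiset.map (fun i => ((hH.eigenvalues i : ℝ) : ℂ)) Finset.univ.val
      = Multiset.map (fun i => ((evAux n i : ℝ) : ℂ)) Finset.univ.val :=
    multisetOfProdAux hcp
  -- descend from ℂ to ℝ
  have hmapped : Multiset.map hH.eigenvalues Finset.univ.val
      = Multiset.map (evAux n) Finset.univ.val := by
    apply Multiset.map_injective (Complex.ofReal_injective)
    rw [Multiset.map_map, Multiset.map_map]
    exact hmul
  rw [hmapped]
  apply Multiset.map_congr rfl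
  intro j _
  simp [evAux, thAux]
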